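/- arXiv:1402.0620 — 2 statements merged into one kernel-verified Lean document; each statement's English description precedes it below -/
import Mathlib

section
/- Suppose that for every prime p ≥ 2898239 we have p' − p ≤ p/(111 log² p), where p' is the next prime after p. Then for every integer k ≥ 2898240, with p the largest prime less than k, one has 2√p + (k − p − 1) ≤ 2√(k−1) + (k−1)/(111 log²(k−1)). -/
open Real

-- monotonicity of `x / (111 log² x)` for `log x ≥ 2`
lemma mono_aux {a b : ℝ} (ha0 : 0 < a) (ha : 2 ≤ Real.log a) (hab : a ≤ b) :
    a / (111 * (Real.log a) ^ 2) ≤ b / (111 * (Real.log b) ^ 2) := by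
  have hb0 : 0 < b := lt_of_lt_of_le ha0 hab
  have hla : 0 < Real.log a := by linarith
  have hlab : Real.log a ≤ Real.log b := Real.log_le_log ha0 hab
  set s := Real.sqrt (b / a) with hs
  have hdiv1 : (1 : ℝ) ≤ b / a := (one_le_div ha0).mpr hab
  have hs1 : 1 ≤ s := Real.one_le_sqrt.mpr hdiv1
  have hs2 : s ^ 2 = b / a := Real.sq_sqrt (by linarith)
  have hlogs : Real.log s ≤ s - 1 := Real.log_le_sub_one_of_pos (by linarith)
  have hlogba : Real.log (b / a) = 2 * Real.log s := by
    rw [← hs2, Real.log_pow]; push_cast; ring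
  have hld : Real.log (b / a) = Real.log b - Real.log a := Real.log_div hb0.ne' ha0.ne'
  have hkey : Real.log b ≤ s * Real.log a := by nlinarith
  have hlb0 : 0 < Real.log b := lt_of_lt_of_le hla hlab
  have hsq : Real.log b ^ 2 ≤ (b / a) * Real.log a ^ 2 := by
    rw [← hs2]; nlinarith
  rw [div_le_div_iff₀ (by positivity) (by positivity)]
  have h1 : a * (Real.log b ^ 2) ≤ a * ((b / a) * Real.log a ^ 2) :=
    mul_le_mul_of_nonneg_left hsq ha0.le
  have h2 : a * ((b / a) * Real.log a ^ 2) = b * Real.log a ^ 2 := by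
    field_simp
  nlinarith [h1, h2]

/-- Assuming Trudgian's bound `p' - p ≤ p / (111 log² p)` for all primes `p ≥ 2898239`,
for every integer `k ≥ 2898240` with `p` the largest prime below `k` we have
`2√p + (k - p - 1) ≤ 2√(k-1) + (k-1)/(111 log²(k-1))`. -/
theorem trudgian_spectral_bound
    (htrud : ∀ p p' : ℕ, p.Prime → 2898239 ≤ p → p'.Prime → p < p' →
      (∀ q : ℕ, q.Prime → p < q → p' ≤ q) →
      (p' : ℝ) - p ≤ (p : ℝ) / (111 * (Real.log p) ^ 2))
    (k : ℕ) (hk : 2898240 ≤ k)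
    (p : ℕ) (hp : p.Prime) (hpk : p < k) (hpmax : ∀ q : ℕ, q.Prime → q < k → q ≤ p) :
    2 * Real.sqrt p + ((k : ℝ) - p - 1) ≤
      2 * Real.sqrt ((k : ℝ) - 1) + ((k : ℝ) - 1) / (111 * (Real.log ((k : ℝ) - 1)) ^ 2) := by
  have hQ : (2898239 : ℕ).Prime := by norm_num
  have hple : 2898239 ≤ p := hpmax 2898239 hQ (by omega)
  -- the next prime after `p`
  have hex : ∃ n, n.Prime ∧ p < n := by
    obtain ⟨q, hq1, hq2⟩ := Nat.exists_infinite_primes (p + 1)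
    exact ⟨q, hq2, by omega⟩
  set p' := Nat.find hex with hp'def
  obtain ⟨hp'prime, hpp'⟩ := Nat.find_spec hex
  have hmin : ∀ q : ℕ, q.Prime → p < q → p' ≤ q := fun q hq hpq =>
    Nat.find_min' hex ⟨hq, hpq⟩
  have hkp' : k ≤ p' := by
    by_contra h
    push_neg at h
    exact absurd (hpmax p' hp'prime h) (by omega)
  have htr := htrud p p' hp hple hp'prime hpp' hmin
  have hkp'R : (k : ℝ) ≤ p' := Nat.cast_le.mpr hkp'
  have hpkR : (p : ℝ) + 1 ≤ k := by exact_mod_cast hpk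
  have hpR : (2898239 : ℝ) ≤ p := by exact_mod_cast hple
  have hp0 : (0 : ℝ) < p := by linarith
  have hloga : 2 ≤ Real.log p := by
    rw [Real.le_log_iff_exp_le hp0]
    have he : Real.exp 2 < 8 := by
      have h1 := Real.exp_one_lt_d9
      have h2 := Real.exp_pos 1
      have : Real.exp 2 = Real.exp 1 * Real.exp 1 := by
        rw [← Real.exp_add]; norm_num
      nlinarith
    linarith
  have h2 := mono_aux (a := (p : ℝ)) (b := (k : ℝ) - 1) hp0 hloga (by linarith)
  have h3 : Real.sqrt p ≤ Real.sqrt ((k : ℝ) - 1) := Real.sqrt_le_sqrt (by linarith)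
  linarith
end

section
/- Assume that for all sufficiently large n there is a prime between n and n + n^{0.525}. Then for all sufficiently large integers k, letting p be the largest prime below k, one has 2√p + (k − p − 1) ≤ 2(1 + k^{0.025})√(k−1). -/
open Real

/-- Assuming the Baker–Harman–Pintz bound (a prime in `(n, n + n^0.525]` for all large `n`),
for all sufficiently large `k`, with `p` the largest prime below `k`,
`2√p + (k - p - 1) ≤ 2(1 + k^0.025)√(k-1)`. -/
theorem bhp_spectral_bound
    (hbhp : ∃ N : ℕ, ∀ n : ℕ, N ≤ n → ∃ q : ℕ, q.Prime ∧ n < q ∧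
      (q : ℝ) ≤ (n : ℝ) + (n : ℝ) ^ (0.525 : ℝ)) :
    ∃ K : ℕ, ∀ k : ℕ, K ≤ k →
      ∀ p : ℕ, p.Prime → p < k → (∀ q : ℕ, q.Prime → q < k → q ≤ p) →
        2 * Real.sqrt p + ((k : ℝ) - p - 1) ≤
          2 * (1 + (k : ℝ) ^ (0.025 : ℝ)) * Real.sqrt ((k : ℝ) - 1) := by
  obtain ⟨N, hN⟩ := hbhp
  refine ⟨2 * N + 10, fun k hk p hp hpk hmax => ?_⟩
  -- p is large: Bertrand gives a prime q ≤ p with q > (k-1)/2 ≥ N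
  have hNp : N ≤ p := by
    obtain ⟨q, hq, hq1, hq2⟩ := Nat.exists_prime_lt_and_le_two_mul ((k - 1) / 2) (by omega)
    have hqk : q < k := by omega
    have := hmax q hq hqk
    omega
  -- BHP at p
  obtain ⟨r, hr, hr1, hr2⟩ := hN p hNp
  have hkr : k ≤ r := by
    by_contra h
    exact absurd (hmax r hr (by omega)) (by omega)
  have hkr' : (k : ℝ) ≤ (p : ℝ) + (p : ℝ) ^ (0.525 : ℝ) := by
    calc (k : ℝ) ≤ (r : ℝ) := by exact_mod_cast hkr
    _ ≤ _ := hr2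
  set x : ℝ := (k : ℝ) - 1 with hxdef
  have hpx : (p : ℝ) ≤ x := by
    have : (p : ℝ) + 1 ≤ (k : ℝ) := by exact_mod_cast hpk
    simp only [hxdef]; linarith
  have hx1 : (1 : ℝ) ≤ x := by
    have : (2 : ℝ) ≤ (k : ℝ) := by exact_mod_cast (by omega : 2 ≤ k)
    simp only [hxdef]; linarith
  have hx0 : (0 : ℝ) < x := by linarith
  have h2 : (p : ℝ) ^ (0.525 : ℝ) ≤ x ^ (0.525 : ℝ) :=
    Real.rpow_le_rpow (Nat.cast_nonneg p) hpx (by norm_num)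
  have h3 : Real.sqrt p ≤ Real.sqrt x := Real.sqrt_le_sqrt hpx
  have h4 : x ^ (0.525 : ℝ) = Real.sqrt x * x ^ (0.025 : ℝ) := by
    rw [show (0.525 : ℝ) = 0.5 + 0.025 by norm_num, Real.rpow_add hx0,
      Real.sqrt_eq_rpow]
    norm_num
  have h6 : x ^ (0.025 : ℝ) ≤ (k : ℝ) ^ (0.025 : ℝ) :=
    Real.rpow_le_rpow (le_of_lt hx0) (by simp only [hxdef]; linarith) (by norm_num)
  have hs0 : (0 : ℝ) ≤ Real.sqrt x := Real.sqrt_nonneg x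
  have ha0 : (0 : ℝ) ≤ (k : ℝ) ^ (0.025 : ℝ) := Real.rpow_nonneg (Nat.cast_nonneg k) _
  have hxz : (0 : ℝ) ≤ x ^ (0.025 : ℝ) := Real.rpow_nonneg (le_of_lt hx0) _
  have hchain : (k : ℝ) - p - 1 ≤ Real.sqrt x * x ^ (0.025 : ℝ) := by
    rw [← h4]; linarith
  nlinarith [mul_le_mul_of_nonneg_left h6 hs0, mul_nonneg hs0 ha0]
end
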